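/- Let f : ℝⁿ → ℝ be differentiable and suppose that for a fixed coordinate i there is L_i > 0 with |∂_i f(x + h e_i) − ∂_i f(x)| ≤ L_i |h| for all x ∈ ℝⁿ and h ∈ ℝ. Then for every x ∈ ℝⁿ, taking the stepsize t = |∂_i f(x)| / L_i, one has min( f(x + t e_i), f(x − t e_i) ) ≤ f(x) − (∂_i f(x))² / (2 L_i). -/

import Mathlib

/-- Descent lemma on the real line: if `g` has derivative `g'` everywhere and `g'` is
Lipschitz-controlled relative to its value at `0`, then a quadratic upper bound holds. -/
lemma descent_aux (g g' : ℝ → ℝ) (hg : ∀ t, HasDerivAt g (g' t) t)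
    (L : ℝ) (hlip : ∀ t, |g' t - g' 0| ≤ L * |t|) (t : ℝ) :
    g t ≤ g 0 + g' 0 * t + L / 2 * t ^ 2 := by
  set ψ : ℝ → ℝ := fun s => g s - g 0 - g' 0 * s - L / 2 * s ^ 2 with hψdef
  have hψ : ∀ s, HasDerivAt ψ (g' s - g' 0 - L * s) s := by
    intro s
    have h1 : HasDerivAt (fun s : ℝ => g' 0 * s) (g' 0) s := by
      simpa using (hasDerivAt_id s).const_mul (g' 0)
    have h2 : HasDerivAt (fun s : ℝ => L / 2 * s ^ 2) (L * s) s := by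
      have := (hasDerivAt_pow 2 s).const_mul (L / 2)
      refine this.congr_deriv ?_
      push_cast
      ring
    exact (((hg s).sub_const (g 0)).sub h1).sub h2
  have hψc : Continuous ψ := by
    have : Differentiable ℝ ψ := fun s => (hψ s).differentiableAt
    exact this.continuous
  have hψderiv : ∀ s, deriv ψ s = g' s - g' 0 - L * s := fun s => (hψ s).deriv
  have key : ψ t ≤ ψ 0 := by
    rcases le_or_gt 0 t with ht | ht
    · have hanti : AntitoneOn ψ (Set.Icc 0 t) := by
        apply antitoneOn_of_deriv_nonpos (convex_Icc 0 t) hψc.continuousOn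
          (fun s _ => (hψ s).differentiableAt.differentiableWithinAt)
        intro s hs
        rw [interior_Icc] at hs
        rw [hψderiv]
        have h1 : g' s - g' 0 ≤ L * |s| := (abs_le.mp (hlip s)).2
        rw [abs_of_pos hs.1] at h1
        linarith
      exact hanti (Set.left_mem_Icc.mpr ht) (Set.right_mem_Icc.mpr ht) ht
    · have hmono : MonotoneOn ψ (Set.Icc t 0) := by
        apply monotoneOn_of_deriv_nonneg (convex_Icc t 0) hψc.continuousOn
          (fun s _ => (hψ s).differentiableAt.differentiableWithinAt)
        intro s hs
        rw [interior_Icc] at hs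
        rw [hψderiv]
        have h1 : -(L * |s|) ≤ g' s - g' 0 := (abs_le.mp (hlip s)).1
        rw [abs_of_neg hs.2] at h1
        linarith
      exact hmono (Set.left_mem_Icc.mpr ht.le) (Set.right_mem_Icc.mpr ht.le) ht.le
  have : ψ 0 = 0 := by simp [hψdef]
  rw [this] at key
  simp only [hψdef] at key
  linarith

theorem coordinate_optimal_stepsize_decrease
    (n : ℕ) (f : (Fin n → ℝ) → ℝ) (hf : Differentiable ℝ f)
    (i : Fin n) (L : ℝ) (hL : 0 < L)
    (hlip : ∀ (x : Fin n → ℝ) (h : ℝ),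
      |fderiv ℝ f (x + h • (Pi.single i 1 : Fin n → ℝ)) ((Pi.single i 1 : Fin n → ℝ))
          - fderiv ℝ f x ((Pi.single i 1 : Fin n → ℝ))| ≤ L * |h|) :
    ∀ x : Fin n → ℝ,
      min (f (x + (|fderiv ℝ f x ((Pi.single i 1 : Fin n → ℝ))| / L) • (Pi.single i 1 : Fin n → ℝ)))
          (f (x - (|fderiv ℝ f x ((Pi.single i 1 : Fin n → ℝ))| / L) • (Pi.single i 1 : Fin n → ℝ)))
        ≤ f x - (fderiv ℝ f x ((Pi.single i 1 : Fin n → ℝ))) ^ 2 / (2 * L) := by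
  intro x
  set e : Fin n → ℝ := (Pi.single i 1 : Fin n → ℝ) with he
  set d : ℝ := fderiv ℝ f x e with hd
  set g : ℝ → ℝ := fun t => f (x + t • e) with hgdef
  set g' : ℝ → ℝ := fun t => fderiv ℝ f (x + t • e) e with hg'def
  have hg : ∀ t, HasDerivAt g (g' t) t := by
    intro t
    have hline : HasDerivAt (fun s : ℝ => x + s • e) e t := by
      simpa using ((hasDerivAt_id t).smul_const e).const_add x
    exact ((hf (x + t • e)).hasFDerivAt.comp_hasDerivAt t hline)
  have hg'0 : g' 0 = d := by simp [hg'def, hd]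
  have hlip' : ∀ t, |g' t - g' 0| ≤ L * |t| := by
    intro t
    rw [hg'0]
    exact hlip x t
  have key := descent_aux g g' hg L hlip' (-d / L)
  rw [hg'0] at key
  have hval : g 0 + d * (-d / L) + L / 2 * (-d / L) ^ 2 = g 0 - d ^ 2 / (2 * L) := by
    field_simp
    ring
  rw [hval] at key
  have hg0 : g 0 = f x := by simp [hgdef]
  rw [hg0] at key
  rcases le_or_gt 0 d with hds | hds
  · have heq : -d / L = -(|d| / L) := by rw [abs_of_nonneg hds]; ring
    have : g (-d / L) = f (x - (|d| / L) • e) := by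
      rw [heq, hgdef]
      simp [neg_smul, sub_eq_add_neg]
    rw [this] at key
    exact le_trans (min_le_right _ _) key
  · have heq : -d / L = |d| / L := by rw [abs_of_neg hds]
    have : g (-d / L) = f (x + (|d| / L) • e) := by rw [heq]
    rw [this] at key
    exact le_trans (min_le_left _ _) key
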